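/- Let G = (V,E) be a finite simple graph on V = {1,…,n} with n ≥ 1 and let J be any set of subsets of V. Then z^S_J(G) = z^C_J(G). In particular z^S_k(G) = z^C_k(G) for every k ∈ ℕ with k ≤ n, where z^S_k(G) = z^S_{J_k}(G) and z^C_k(G) = z^C_{J_k}(G) for J_k = { I ⊆ V : |I| = k }. -/

import Mathlib

open Matrix

noncomputable section

/-- A stable set vector of a graph `G`: a 0/1 vector with `s i * s j = 0` on edges. -/
def IsStableVec {V : Type*} (G : SimpleGraph V) (s : V → ℝ) : Prop :=
  (∀ i, s i = 0 ∨ s i = 1) ∧ ∀ i j, G.Adj i j → s i * s j = 0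

/-- The squared stable set polytope `STAB²(G) = conv{ s sᵀ : s ∈ S(G) }`. -/
def stab2 {V : Type*} (G : SimpleGraph V) : Set (Matrix V V ℝ) :=
  convexHull ℝ { M | ∃ s, IsStableVec G s ∧ M = Matrix.vecMulVec s s }

/-- The scaled squared stable set polytope
`SSTAB²(G) = conv({ (1/(sᵀs)) s sᵀ : s ∈ S(G), s ≠ 0 } ∪ {0})`. -/
def sstab2 {V : Type*} [Fintype V] (G : SimpleGraph V) : Set (Matrix V V ℝ) :=
  convexHull ℝ
    ({ M | ∃ s, IsStableVec G s ∧ s ≠ 0 ∧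
        M = (∑ k, s k * s k)⁻¹ • Matrix.vecMulVec s s } ∪ {(0 : Matrix V V ℝ)})

/-- The feasible region `TH²(G)` of the SDP (Tn+1): pairs `(x, X)` with `X` symmetric,
`diag X = x`, `X i j = 0` on edges and `X - x xᵀ` positive semidefinite. -/
def th2 {n : ℕ} (G : SimpleGraph (Fin n)) :
    Set ((Fin n → ℝ) × Matrix (Fin n) (Fin n) ℝ) :=
  { p | p.2.IsSymm ∧ (∀ i, p.2 i i = p.1 i) ∧
      (∀ i j, G.Adj i j → p.2 i j = 0) ∧ (p.2 - Matrix.vecMulVec p.1 p.1).PosSemidef }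

/-- The feasible region `CTH²(G)` of the SDP (Tn): symmetric PSD matrices with trace 1
vanishing on edges. -/
def cth2 {n : ℕ} (G : SimpleGraph (Fin n)) : Set (Matrix (Fin n) (Fin n) ℝ) :=
  { X | X.IsSymm ∧ X.trace = 1 ∧ (∀ i j, G.Adj i j → X i j = 0) ∧ X.PosSemidef }

/-- The principal submatrix `X_I` of `X` indexed by `I`. -/
def subMat {n : ℕ} (X : Matrix (Fin n) (Fin n) ℝ) (I : Finset (Fin n)) :
    Matrix (I : Set (Fin n)) (I : Set (Fin n)) ℝ :=
  X.submatrix Subtype.val Subtype.val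

/-- The exact subgraph constraint (ESC) for the subgraph of `G` induced by `I`. -/
def escFeas {n : ℕ} (G : SimpleGraph (Fin n)) (X : Matrix (Fin n) (Fin n) ℝ)
    (I : Finset (Fin n)) : Prop :=
  subMat X I ∈ stab2 (G.induce (I : Set (Fin n)))

/-- The scaled exact subgraph constraint (SESC) for the subgraph of `G` induced by `I`. -/
def sescFeas {n : ℕ} (G : SimpleGraph (Fin n)) (X : Matrix (Fin n) (Fin n) ℝ)
    (I : Finset (Fin n)) : Prop :=
  subMat X I ∈ sstab2 (G.induce (I : Set (Fin n)))

/-- `z^E_J(G)`: optimal value of (Tn+1) with the ESCs for all `I ∈ J`. -/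
def zE {n : ℕ} (G : SimpleGraph (Fin n)) (J : Set (Finset (Fin n))) : ℝ :=
  sSup { r | ∃ x X, (x, X) ∈ th2 G ∧ (∀ I ∈ J, escFeas G X I) ∧ r = ∑ i, x i }

/-- `z^C_J(G)`: optimal value of (Tn) with the ESCs for all `I ∈ J`. -/
def zC {n : ℕ} (G : SimpleGraph (Fin n)) (J : Set (Finset (Fin n))) : ℝ :=
  sSup { r | ∃ X, X ∈ cth2 G ∧ (∀ I ∈ J, escFeas G X I) ∧ r = ∑ i, ∑ j, X i j }

/-- `z^S_J(G)`: optimal value of (Tn) with the SESCs for all `I ∈ J`. -/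
def zS {n : ℕ} (G : SimpleGraph (Fin n)) (J : Set (Finset (Fin n))) : ℝ :=
  sSup { r | ∃ X, X ∈ cth2 G ∧ (∀ I ∈ J, sescFeas G X I) ∧ r = ∑ i, ∑ j, X i j }

/-- The collection `J_k` of all vertex subsets of cardinality `k`. -/
def Jk (n k : ℕ) : Set (Finset (Fin n)) := { I | I.card = k }

lemma one_le_sumSq {V : Type*} [Fintype V] {s : V → ℝ}
    (h01 : ∀ i, s i = 0 ∨ s i = 1) (hs : s ≠ 0) : 1 ≤ ∑ k, s k * s k := by
  obtain ⟨k, hk⟩ := Function.ne_iff.mp hs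
  have hk1 : s k = 1 := (h01 k).resolve_left hk
  calc (1 : ℝ) = s k * s k := by rw [hk1]; ring
    _ ≤ ∑ k, s k * s k :=
        Finset.single_le_sum (fun i _ => mul_self_nonneg (s i)) (Finset.mem_univ k)

lemma sstab2_subset_stab2 {V : Type*} [Fintype V] (G : SimpleGraph V) :
    sstab2 G ⊆ stab2 G := by
  refine convexHull_min ?_ (convex_convexHull ℝ _)
  have h0 : (0 : Matrix V V ℝ) ∈ stab2 G := by
    refine subset_convexHull ℝ _ ⟨0, ⟨fun i => Or.inl rfl, fun i j _ => by simp⟩, ?_⟩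
    ext i j; simp [Matrix.vecMulVec_apply]
  rintro M (⟨s, hs, hsne, rfl⟩ | hM)
  · have h1 : Matrix.vecMulVec s s ∈ stab2 G := subset_convexHull ℝ _ ⟨s, hs, rfl⟩
    have ht1 : (1 : ℝ) ≤ ∑ k, s k * s k := one_le_sumSq hs.1 hsne
    have ht0 : (0 : ℝ) < ∑ k, s k * s k := lt_of_lt_of_le one_pos ht1
    have hinv0 : (0 : ℝ) ≤ (∑ k, s k * s k)⁻¹ := inv_nonneg.mpr ht0.le
    have hinv1 : (∑ k, s k * s k)⁻¹ ≤ 1 := inv_le_one_of_one_le₀ ht1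
    have := (convex_convexHull ℝ _) h1 h0 hinv0 (by linarith : (0:ℝ) ≤ 1 - (∑ k, s k * s k)⁻¹)
      (by ring)
    simpa [stab2] using this
  · rw [Set.mem_singleton_iff] at hM
    subst hM; exact h0

lemma sesc_of_esc {n : ℕ} {G : SimpleGraph (Fin n)} {X : Matrix (Fin n) (Fin n) ℝ}
    (hX : X ∈ cth2 G) (I : Finset (Fin n)) (h : escFeas G X I) : sescFeas G X I := by
  classical
  obtain ⟨hsym, htr, hedge, hpsd⟩ := hX
  have hdiag : ∀ i, 0 ≤ X i i := by
    intro i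
    exact hpsd.diag_nonneg
  rw [escFeas, stab2, convexHull_eq] at h
  obtain ⟨ι, t, w, z, hw0, hw1, hz, hcm⟩ := h
  choose s hs hzs using fun (j : {i // i ∈ t}) => hz j.1 j.2
  set T : {i // i ∈ t} → ℝ := fun j => ∑ k, s j k * s j k with hTdef
  have hTnn : ∀ j, 0 ≤ T j := fun j => Finset.sum_nonneg fun k _ => mul_self_nonneg _
  have hY : subMat X I = ∑ j ∈ t.attach, w j.1 • Matrix.vecMulVec (s j) (s j) := by
    rw [← hcm, Finset.centerMass_eq_of_sum_1 _ _ hw1,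
      ← Finset.sum_attach t (fun i => w i • z i)]
    exact Finset.sum_congr rfl fun j _ => by rw [hzs j]
  have htrY : ∑ j ∈ t.attach, w j.1 * T j = ∑ i : (I : Set (Fin n)), X i i := by
    calc ∑ j ∈ t.attach, w j.1 * T j
        = ∑ j ∈ t.attach, ∑ k : (I : Set (Fin n)), w j.1 * (s j k * s j k) := by
          simp [hTdef, Finset.mul_sum]
      _ = ∑ k : (I : Set (Fin n)), ∑ j ∈ t.attach, w j.1 * (s j k * s j k) :=
          Finset.sum_comm
      _ = ∑ i : (I : Set (Fin n)), X i i := by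
          refine Finset.sum_congr rfl fun k _ => ?_
          have : subMat X I k k = X k k := rfl
          rw [← this, hY, Matrix.sum_apply]
          refine Finset.sum_congr rfl fun j _ => ?_
          simp [Matrix.vecMulVec_apply]
  have hle : ∑ j ∈ t.attach, w j.1 * T j ≤ 1 := by
    rw [htrY, show (∑ i : (I : Set (Fin n)), X i i) = ∑ i ∈ I, X i i from
      Finset.sum_finset_coe (fun i => X i i) I]
    calc ∑ i ∈ I, X i i ≤ ∑ i : Fin n, X i i :=
          Finset.sum_le_sum_of_subset_of_nonneg (Finset.subset_univ I)
            (fun i _ _ => hdiag i)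
      _ = 1 := by rw [← htr]; simp [Matrix.trace, Matrix.diag]
  -- build the convex combination witnessing membership in sstab2
  set c : Option {i // i ∈ t} → ℝ :=
    fun o => o.elim (1 - ∑ j ∈ t.attach, w j.1 * T j) (fun j => w j.1 * T j) with hcdef
  set p : Option {i // i ∈ t} → Matrix (I : Set (Fin n)) (I : Set (Fin n)) ℝ :=
    fun o => o.elim 0 (fun j =>
      if s j = 0 then 0 else (T j)⁻¹ • Matrix.vecMulVec (s j) (s j)) with hpdef
  have hnone : (none : Option {i // i ∈ t}) ∉ t.attach.image some := by simp
  have hsome : ∀ x ∈ t.attach, ∀ y ∈ t.attach, some x = some y → x = y := by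
    intro x _ y _ hxy; exact Option.some_injective _ hxy
  have hsum : ∑ o ∈ insert none (t.attach.image some), c o = 1 := by
    rw [Finset.sum_insert hnone, Finset.sum_image hsome]
    simp [hcdef]
  have hcnn : ∀ o ∈ insert none (t.attach.image some), 0 ≤ c o := by
    intro o ho
    rcases Finset.mem_insert.mp ho with rfl | ho
    · simpa [hcdef] using hle
    · obtain ⟨j, hj, rfl⟩ := Finset.mem_image.mp ho
      exact mul_nonneg (hw0 j.1 j.2) (hTnn j)
  have hpm : ∀ o ∈ insert none (t.attach.image some),
      p o ∈ ({M | ∃ s, IsStableVec (G.induce (I : Set (Fin n))) s ∧ s ≠ 0 ∧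
        M = (∑ k, s k * s k)⁻¹ • Matrix.vecMulVec s s} ∪ {(0 : Matrix (I : Set (Fin n)) (I : Set (Fin n)) ℝ)}) := by
    intro o ho
    rcases Finset.mem_insert.mp ho with rfl | ho
    · exact Or.inr rfl
    · obtain ⟨j, hj, rfl⟩ := Finset.mem_image.mp ho
      by_cases h0 : s j = 0
      · right; simp [hpdef, h0]
      · left
        refine ⟨s j, hs j, h0, ?_⟩
        simp [hpdef, h0, hTdef]
  have hcm' : (insert none (t.attach.image some)).centerMass c p = subMat X I := by
    rw [Finset.centerMass_eq_of_sum_1 _ _ hsum, Finset.sum_insert hnone,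
      Finset.sum_image hsome, hY]
    have : c none • p none = 0 := by simp [hcdef, hpdef]
    rw [this, zero_add]
    refine Finset.sum_congr rfl fun j _ => ?_
    by_cases h0 : s j = 0
    · simp [hcdef, hpdef, h0]
    · have hT1 : (1 : ℝ) ≤ T j := one_le_sumSq (hs j).1 h0
      have hTne : T j ≠ 0 := ne_of_gt (lt_of_lt_of_le one_pos hT1)
      simp only [hcdef, hpdef, Option.elim, if_neg h0, smul_smul]
      rw [mul_assoc, mul_inv_cancel₀ hTne, mul_one]
  rw [sescFeas, sstab2, ← hcm']
  exact Finset.centerMass_mem_convexHull _ hcnn (by rw [hsum]; norm_num) hpm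

lemma zS_eq_zC {n : ℕ} (G : SimpleGraph (Fin n)) (J : Set (Finset (Fin n))) :
    zS G J = zC G J := by
  unfold zS zC
  congr 1
  ext r
  constructor
  · rintro ⟨X, hX, hf, rfl⟩
    exact ⟨X, hX, fun I hI => sstab2_subset_stab2 _ (hf I hI), rfl⟩
  · rintro ⟨X, hX, hf, rfl⟩
    exact ⟨X, hX, fun I hI => sesc_of_esc hX I (hf I hI), rfl⟩

/-- `z^S_J(G) = z^C_J(G)` for every collection `J` of vertex subsets;
in particular `z^S_k(G) = z^C_k(G)` for every `k ≤ n`. -/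
theorem stmt10 {n : ℕ} (hn : 1 ≤ n) (G : SimpleGraph (Fin n))
    (J : Set (Finset (Fin n))) :
    zS G J = zC G J ∧ ∀ k : ℕ, k ≤ n → zS G (Jk n k) = zC G (Jk n k) := by
  exact ⟨zS_eq_zC G J, fun k _ => zS_eq_zC G (Jk n k)⟩
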